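/- NFA universality over the binary alphabet {0,1} reduces to the linear-bound analysis problem for the core language with resets: given an NFA A = (Q, {0,1}, δ, q_0, F) with F nonempty, the program P(A) constructed in the paper (simulating subset reachability with zero/nonzero variable values, one variable per state, where X_q = 0 iff q is reachable on the word chosen so far, and a final command Fin multiplying Z by the variables of all accepting states) has its variable Z linearly bounded in the inputs if and only if L(A) = {0,1}*. -/

import Mathlib

open Finset

variable {n : ℕ}

/-- One subset-construction step of the NFA with transition relation `δ`. -/
def setStep (δ : Fin n → Fin 2 → Fin n → Bool) (S : Finset (Fin n))
    (a : Fin 2) : Finset (Fin n) :=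
  Finset.univ.filter fun q => ∃ i ∈ S, δ i a q

/-- The set of states of the NFA reachable from `q₀` on the word `w`. -/
def reachSet (δ : Fin n → Fin 2 → Fin n → Bool) (q₀ : Fin n)
    (w : List (Fin 2)) : Finset (Fin n) :=
  w.foldl (setStep δ) {q₀}

/-- The NFA `(Fin n, {0,1}, δ, q₀, F)` accepts the word `w`. -/
def Accepts (δ : Fin n → Fin 2 → Fin n → Bool) (q₀ : Fin n)
    (F : Finset (Fin n)) (w : List (Fin 2)) : Prop :=
  ∃ f ∈ F, f ∈ reachSet δ q₀ w

/-- One iteration of the loop of the reduction program, choosing letter `a`: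
for each state `q`, `X'_q := Z · ∏ (X_i over a-predecessors i of q)`, then the
`X'_q` are copied into the `X_q`; `Z` is unchanged.  The store is the pair of
the state variables `X` and the variable `Z`. -/
def progStep (δ : Fin n → Fin 2 → Fin n → Bool) (a : Fin 2)
    (s : (Fin n → ℕ) × ℕ) : (Fin n → ℕ) × ℕ :=
  (fun q => s.2 * ∏ i ∈ Finset.univ.filter (fun i => δ i a q), s.1 i, s.2)

/-- Executing the loop body once per letter of `w`, starting from the store
obtained from the input `x` by the initial reset `X_{q₀} := 0` (and `Z = z`). -/
def runLoop (δ : Fin n → Fin 2 → Fin n → Bool) (q₀ : Fin n)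
    (x : Fin n → ℕ) (z : ℕ) (w : List (Fin 2)) : (Fin n → ℕ) × ℕ :=
  w.foldl (fun s a => progStep δ a s) (Function.update x q₀ 0, z)

/-- The final value of `Z` after the command `Fin`, which sets
`Z := Z · ∏_{f ∈ F} X_f`. -/
def finOut (δ : Fin n → Fin 2 → Fin n → Bool) (q₀ : Fin n)
    (F : Finset (Fin n)) (x : Fin n → ℕ) (z : ℕ) (w : List (Fin 2)) : ℕ :=
  (runLoop δ q₀ x z w).2 * ∏ f ∈ F, (runLoop δ q₀ x z w).1 f

lemma foldl_snd (δ : Fin n → Fin 2 → Fin n → Bool) (w : List (Fin 2))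
    (s : (Fin n → ℕ) × ℕ) :
    (w.foldl (fun s a => progStep δ a s) s).2 = s.2 := by
  induction w generalizing s with
  | nil => rfl
  | cons a w ih => simpa [progStep] using ih (progStep δ a s)

lemma foldl_zero (δ : Fin n → Fin 2 → Fin n → Bool) (w : List (Fin 2))
    (s : (Fin n → ℕ) × ℕ) (S : Finset (Fin n))
    (h : ∀ q ∈ S, s.1 q = 0) :
    ∀ q ∈ w.foldl (setStep δ) S,
      (w.foldl (fun s a => progStep δ a s) s).1 q = 0 := by
  induction w generalizing s S with
  | nil => exact h
  | cons a w ih =>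
    refine ih (progStep δ a s) (setStep δ S a) ?_
    intro q hq
    simp only [setStep, Finset.mem_filter] at hq
    obtain ⟨-, i, hiS, hi⟩ := hq
    simp only [progStep]
    rw [Finset.prod_eq_zero (Finset.mem_filter.mpr ⟨Finset.mem_univ i, hi⟩) (h i hiS)]
    exact mul_zero _

lemma foldl_large (δ : Fin n → Fin 2 → Fin n → Bool) (w : List (Fin 2))
    (s : (Fin n → ℕ) × ℕ) (S : Finset (Fin n)) (N : ℕ) (hN : 1 ≤ N)
    (hz : s.2 = N) (h : ∀ q ∉ S, N ≤ s.1 q) :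
    ∀ q ∉ w.foldl (setStep δ) S,
      N ≤ (w.foldl (fun s a => progStep δ a s) s).1 q := by
  induction w generalizing s S with
  | nil => exact h
  | cons a w ih =>
    refine ih (progStep δ a s) (setStep δ S a) hz ?_
    intro q hq
    simp only [setStep, Finset.mem_filter, Finset.mem_univ, true_and, not_exists,
      not_and] at hq
    simp only [progStep, hz]
    calc N = N * 1 := (mul_one N).symm
    _ ≤ N * ∏ i ∈ Finset.univ.filter (fun i => δ i a q), s.1 i := by
        refine Nat.mul_le_mul_left N (Finset.one_le_prod' ?_)
        intro i hi
        simp only [Finset.mem_filter] at hi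
        exact le_trans hN (h i (fun hiS => hq i hiS hi.2))

/-- `Z` is linearly bounded in the inputs (over all runs of the
program `P(A)`, i.e. all words `w` of length at most the loop bound `y`)
if and only if the NFA `A` is universal. -/
theorem linear_bound_iff_universal
    (δ : Fin n → Fin 2 → Fin n → Bool) (q₀ : Fin n) (F : Finset (Fin n))
    (hF : F.Nonempty) :
    (∃ c d : ℕ, ∀ (x : Fin n → ℕ) (y z : ℕ) (w : List (Fin 2)),
        w.length ≤ y →
        finOut δ q₀ F x z w ≤ c * ((∑ i, x i) + y + z) + d) ↔
    (∀ w : List (Fin 2), Accepts δ q₀ F w) := by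
  constructor
  · rintro ⟨c, d, hb⟩ w
    by_contra hacc
    set N : ℕ := c * n + c * w.length + c + d + 1 with hNdef
    have hN : 1 ≤ N := by omega
    have hlarge := foldl_large δ w (Function.update (fun _ => N) q₀ 0, N) {q₀} N hN rfl
      (by intro q hq
          simp only [Finset.mem_singleton] at hq
          simp [Function.update_of_ne hq])
    obtain ⟨f, hfF⟩ := hF
    have hfnot : f ∉ reachSet δ q₀ w := fun hr => hacc ⟨f, hfF, hr⟩
    have hXf : N ≤ (runLoop δ q₀ (fun _ => N) N w).1 f := hlarge f hfnot
    have hall : ∀ g ∈ F, 1 ≤ (runLoop δ q₀ (fun _ => N) N w).1 g := by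
      intro g hg
      rcases Nat.eq_zero_or_pos ((runLoop δ q₀ (fun _ => N) N w).1 g) with h0 | h1
      · exfalso
        by_cases hr : g ∈ reachSet δ q₀ w
        · exact hacc ⟨g, hg, hr⟩
        · have h1 : N ≤ (runLoop δ q₀ (fun _ => N) N w).1 g := hlarge g hr
          omega
      · exact h1
    have hprod : N ≤ ∏ g ∈ F, (runLoop δ q₀ (fun _ => N) N w).1 g :=
      le_trans hXf (Finset.single_le_prod' hall hfF)
    have hz : (runLoop δ q₀ (fun _ => N) N w).2 = N := foldl_snd δ w _
    have hlow : N * N ≤ finOut δ q₀ F (fun _ => N) N w := by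
      rw [finOut, hz]
      exact Nat.mul_le_mul_left N hprod
    have hup := hb (fun _ => N) w.length N w le_rfl
    have hsum : (∑ _i : Fin n, N) = n * N := by
      simp [Finset.sum_const, mul_comm]
    rw [hsum] at hup
    have h1 : c * w.length ≤ c * w.length * N := Nat.le_mul_of_pos_right _ hN
    have h2 : d ≤ d * N := Nat.le_mul_of_pos_right _ hN
    have hN2 : N * N = c * n * N + c * w.length * N + c * N + d * N + N := by
      rw [hNdef]; ring
    nlinarith [hup, hlow, hN, h1, h2, hN2]
  · intro huniv
    refine ⟨0, 0, fun x y z w hw => ?_⟩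
    obtain ⟨f, hfF, hfr⟩ := huniv w
    have h0 : (runLoop δ q₀ x z w).1 f = 0 :=
      foldl_zero δ w (Function.update x q₀ 0, z) {q₀}
        (by intro q hq
            simp only [Finset.mem_singleton] at hq
            subst hq; simp) f hfr
    have : finOut δ q₀ F x z w = 0 := by
      rw [finOut, Finset.prod_eq_zero hfF h0, mul_zero]
    omega
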